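/- For every real κ with 1 < κ ≤ 2 and every vector w ∈ ℝ⁵ satisfying ⟨w, w⟩ = 1, ⟨w_x, w⟩ = −1, ⟨w_c, w⟩ = −1, ⟨w_f, w⟩ = −1, ⟨w_c*, w⟩ = 1 and ⟨w_z, w⟩ = √(3 + 2√κ − κ), the reflected bridge-ball vector w' := w − 2⟨w, w_c*⟩ w_c* satisfies: ⟨w_x, w'⟩ = −1, ⟨w_{-c}, w'⟩ = −1, ⟨w_f, w'⟩ = −1 (tangencies), ⟨w_c, w'⟩ = −1 − 2√κ < −1 and ⟨w_{-f}, w'⟩ = 3 − 4/√κ − 8/κ < −1 (disjointness), and ⟨w_t, w'⟩ = (2 + 2√κ − κ)/√(4 + κ²) ≥ 1 (containment in the tangency ball). -/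

import Mathlib

noncomputable section

/-- The Lorentzian product on ℝ⁵: ⟨u,v⟩ = u₁v₁ + u₂v₂ + u₃v₃ + u₄v₄ − u₅v₅. -/
def lprod5 (u v : Fin 5 → ℝ) : ℝ :=
  u 0 * v 0 + u 1 * v 1 + u 2 * v 2 + u 3 * v 3 - u 4 * v 4

/-- Inversive coordinates of the blow-ups to ℝ³ of the standard pyramidal disk
packing, its mirror and tangency disks, and the half-space `{z ≥ 0}`. -/
def wx : Fin 5 → ℝ := ![0, -1, 0, 1, 1]
def wc (κ : ℝ) : Fin 5 → ℝ := ![0, 1 - κ, 0, -1, κ - 1]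
def wf (κ : ℝ) : Fin 5 → ℝ := ![2 / Real.sqrt κ, 0, 0, 2 / κ - 1, 2 / κ]
def wmc : Fin 5 → ℝ := ![0, 1, 0, 1, 1]
def wmf (κ : ℝ) : Fin 5 → ℝ := ![-(2 / Real.sqrt κ), 0, 0, 2 / κ - 1, 2 / κ]
def wcs (κ : ℝ) : Fin 5 → ℝ :=
  ![0, -(Real.sqrt κ / 2), 0, -(1 / Real.sqrt κ), (κ - 2) / (2 * Real.sqrt κ)]
def wt (κ : ℝ) : Fin 5 → ℝ :=
  ![0, -(2 / Real.sqrt (κ ^ 2 + 4)), 0, κ / Real.sqrt (κ ^ 2 + 4), 0]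
def wz : Fin 5 → ℝ := ![0, 0, 1, 0, 0]

set_option maxHeartbeats 2000000

/-- For `1 < κ ≤ 2`, the reflected bridge-ball vector `w' = w − 2⟨w, w_c*⟩ w_c*`
is tangent to `b_x`, `b₋c`, `b_f`, disjoint from `b_c` and `b₋f`, and contained
in the tangency ball `b_t`. -/
theorem reflected_bridge_ball_products (κ : ℝ) (hκ1 : 1 < κ) (hκ2 : κ ≤ 2)
    (w : Fin 5 → ℝ)
    (hww : lprod5 w w = 1) (hx : lprod5 wx w = -1) (hc : lprod5 (wc κ) w = -1)
    (hf : lprod5 (wf κ) w = -1) (hcs : lprod5 (wcs κ) w = 1)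
    (hz : lprod5 wz w = Real.sqrt (3 + 2 * Real.sqrt κ - κ)) :
    lprod5 wx (w - (2 * lprod5 w (wcs κ)) • wcs κ) = -1 ∧
    lprod5 wmc (w - (2 * lprod5 w (wcs κ)) • wcs κ) = -1 ∧
    lprod5 (wf κ) (w - (2 * lprod5 w (wcs κ)) • wcs κ) = -1 ∧
    lprod5 (wc κ) (w - (2 * lprod5 w (wcs κ)) • wcs κ) = -1 - 2 * Real.sqrt κ ∧
    -1 - 2 * Real.sqrt κ < -1 ∧
    lprod5 (wmf κ) (w - (2 * lprod5 w (wcs κ)) • wcs κ) =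
      3 - 4 / Real.sqrt κ - 8 / κ ∧
    3 - 4 / Real.sqrt κ - 8 / κ < -1 ∧
    lprod5 (wt κ) (w - (2 * lprod5 w (wcs κ)) • wcs κ) =
      (2 + 2 * Real.sqrt κ - κ) / Real.sqrt (4 + κ ^ 2) ∧
    1 ≤ (2 + 2 * Real.sqrt κ - κ) / Real.sqrt (4 + κ ^ 2) := by
  have hκ0 : (0:ℝ) < κ := by linarith
  obtain ⟨s, hs0, hκeq, hsz⟩ : ∃ s : ℝ, 0 < s ∧ κ = s ^ 2 ∧ Real.sqrt κ = s :=
    ⟨Real.sqrt κ, Real.sqrt_pos.mpr hκ0, (Real.sq_sqrt hκ0.le).symm, rfl⟩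
  subst hκeq
  have hs1 : 1 < s := by nlinarith
  have hs2 : s ^ 2 ≤ 2 := hκ2
  have hsne : s ≠ 0 := ne_of_gt hs0
  -- unfolded copies of the hypotheses
  have hx' := hx; have hc' := hc; have hf' := hf; have hcs' := hcs
  simp only [lprod5, wx, wc, wf, wcs,
    Matrix.cons_val_zero, Matrix.cons_val_one, Matrix.head_cons,
    Matrix.cons_val_two, Matrix.tail_cons, Matrix.cons_val_three,
    Matrix.cons_val_four, hsz] at hx' hc' hf' hcs'
  have hcsc := hcs'
  have hfc := hf'
  field_simp at hcsc hfc
  -- the components of w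
  have hb : w 1 = -s := by
    linear_combination (-(1/2)) * hx' + (1/2) * hc' - (1/2) * hcsc
  have hd2 : s ^ 2 * w 3 = 2 - s ^ 2 := by linear_combination (s ^ 2 - 1) * hx' - hc'
  have he2 : s ^ 2 * w 4 = 2 + s ^ 3 := by linear_combination -hx' - hc' - s ^ 2 * hb
  have hd : w 3 = 2 / s ^ 2 - 1 := by
    field_simp
    linear_combination hd2
  have he : w 4 = 2 / s ^ 2 + s := by
    field_simp
    linear_combination he2
  have ha : w 0 = 1 + 2 / s - s := by
    have ha2 : s ^ 3 * (s * w 0) = s ^ 3 * (s + 2 - s ^ 2) := by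
      linear_combination (s ^ 3 / 2) * hfc - (s/2) * (2 - s ^ 2) * hd2 + s * he2
    have h := mul_left_cancel₀ (pow_ne_zero 3 hsne) ha2
    field_simp
    linear_combination h
  -- bilinearity and symmetry
  have hbil : ∀ v u : Fin 5 → ℝ, ∀ t : ℝ,
      lprod5 v (w - t • u) = lprod5 v w - t * lprod5 v u := by
    intro v u t
    simp only [lprod5, Pi.sub_apply, Pi.smul_apply, smul_eq_mul]
    ring
  have hwcs : lprod5 w (wcs (s ^ 2)) = 1 := by
    rw [show lprod5 w (wcs (s ^ 2)) = lprod5 (wcs (s ^ 2)) w by unfold lprod5; ring]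
    exact hcs
  -- products with w_c*
  have cx : lprod5 wx (wcs (s ^ 2)) = 0 := by
    simp only [lprod5, wx, wcs, Matrix.cons_val_zero, Matrix.cons_val_one,
      Matrix.head_cons, Matrix.cons_val_two, Matrix.tail_cons,
      Matrix.cons_val_three, Matrix.cons_val_four, hsz]
    field_simp
    ring
  have cmc : lprod5 wmc (wcs (s ^ 2)) = -s := by
    simp only [lprod5, wmc, wcs, Matrix.cons_val_zero, Matrix.cons_val_one,
      Matrix.head_cons, Matrix.cons_val_two, Matrix.tail_cons,
      Matrix.cons_val_three, Matrix.cons_val_four, hsz]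
    field_simp
    ring
  have cf : lprod5 (wf (s ^ 2)) (wcs (s ^ 2)) = 0 := by
    simp only [lprod5, wf, wcs, Matrix.cons_val_zero, Matrix.cons_val_one,
      Matrix.head_cons, Matrix.cons_val_two, Matrix.tail_cons,
      Matrix.cons_val_three, Matrix.cons_val_four, hsz]
    field_simp
    ring
  have cc : lprod5 (wc (s ^ 2)) (wcs (s ^ 2)) = s := by
    simp only [lprod5, wc, wcs, Matrix.cons_val_zero, Matrix.cons_val_one,
      Matrix.head_cons, Matrix.cons_val_two, Matrix.tail_cons,
      Matrix.cons_val_three, Matrix.cons_val_four, hsz]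
    field_simp
    ring
  have cmf : lprod5 (wmf (s ^ 2)) (wcs (s ^ 2)) = 0 := by
    simp only [lprod5, wmf, wcs, Matrix.cons_val_zero, Matrix.cons_val_one,
      Matrix.head_cons, Matrix.cons_val_two, Matrix.tail_cons,
      Matrix.cons_val_three, Matrix.cons_val_four, hsz]
    field_simp
    ring
  have ct : lprod5 (wt (s ^ 2)) (wcs (s ^ 2)) = 0 := by
    simp only [lprod5, wt, wcs, Matrix.cons_val_zero, Matrix.cons_val_one,
      Matrix.head_cons, Matrix.cons_val_two, Matrix.tail_cons,
      Matrix.cons_val_three, Matrix.cons_val_four, hsz]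
    field_simp
    ring
  -- the tangency-ball radius
  set r := Real.sqrt ((s ^ 2) ^ 2 + 4) with hrdef
  have hr0 : (0:ℝ) < r := Real.sqrt_pos.mpr (by positivity)
  have hrne : r ≠ 0 := ne_of_gt hr0
  have hr4 : Real.sqrt (4 + (s ^ 2) ^ 2) = r := by rw [hrdef, add_comm]
  -- products with w
  have pmc : lprod5 wmc w = -1 - 2 * s := by
    simp only [lprod5, wmc, Matrix.cons_val_zero, Matrix.cons_val_one,
      Matrix.head_cons, Matrix.cons_val_two, Matrix.tail_cons,
      Matrix.cons_val_three, Matrix.cons_val_four, hb, hd, he]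
    ring
  have pmf : lprod5 (wmf (s ^ 2)) w = 3 - 4 / s - 8 / s ^ 2 := by
    simp only [lprod5, wmf, Matrix.cons_val_zero, Matrix.cons_val_one,
      Matrix.head_cons, Matrix.cons_val_two, Matrix.tail_cons,
      Matrix.cons_val_three, Matrix.cons_val_four, hsz, ha, hb, hd, he]
    field_simp
    ring
  have pt : lprod5 (wt (s ^ 2)) w = (2 + 2 * s - s ^ 2) / r := by
    simp only [lprod5, wt, Matrix.cons_val_zero, Matrix.cons_val_one,
      Matrix.head_cons, Matrix.cons_val_two, Matrix.tail_cons,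
      Matrix.cons_val_three, Matrix.cons_val_four, hsz, ha, hb, hd, he, ← hrdef]
    field_simp
    ring
  have hrle : r ≤ 2 + 2 * s - s ^ 2 := by
    have hp : (0:ℝ) ≤ 2 + 2 * s - s ^ 2 := by nlinarith
    have hle : (s ^ 2) ^ 2 + 4 ≤ (2 + 2 * s - s ^ 2) ^ 2 := by nlinarith
    calc r = Real.sqrt ((s ^ 2) ^ 2 + 4) := hrdef
      _ ≤ Real.sqrt ((2 + 2 * s - s ^ 2) ^ 2) := Real.sqrt_le_sqrt hle
      _ = 2 + 2 * s - s ^ 2 := Real.sqrt_sq hp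
  simp only [hbil, hwcs, mul_one, hsz, hr4]
  refine ⟨by rw [hx, cx]; try ring, by rw [pmc, cmc]; try ring, by rw [hf, cf]; try ring,
    by rw [hc, cc]; try ring, by linarith, by rw [pmf, cmf]; try ring, ?_,
    by rw [pt, ct]; try ring, ?_⟩
  · have h8 : (4:ℝ) ≤ 8 / s ^ 2 := by rw [le_div_iff₀ (by positivity)]; nlinarith
    have h4 : (0:ℝ) < 4 / s := by positivity
    linarith
  · rw [le_div_iff₀ hr0]; linarith
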